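/- Let H be a graph on n vertices and G = W(H) its whisker graph. Then for every q ≥ 1 with q ≤ ν(G), the dimension of the q-matching-free complex MF^q(G) equals n + q − 2; equivalently, the maximum size of a subset F ⊆ V(G) whose induced subgraph has no matching of size q is n + q − 1. -/

import Mathlib

variable {V : Type*}

/-- `M` is a set of pairwise disjoint edges of `G` with all endpoints in `F`. -/
def IsMatchingOn (G : SimpleGraph V) (F : Finset V) (M : Finset (Sym2 V)) : Prop :=
  (∀ e ∈ M, e ∈ G.edgeSet) ∧
  (∀ e ∈ M, ∀ v ∈ e, v ∈ F) ∧
  (∀ e ∈ M, ∀ e' ∈ M, e ≠ e' → ∀ v ∈ e, v ∉ e')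

/-- `F` is a face of the `q`-matching-free complex `MF^q(G)`. -/
def MFFace (G : SimpleGraph V) (q : ℕ) (F : Finset V) : Prop :=
  ¬ ∃ M : Finset (Sym2 V), IsMatchingOn G F M ∧ M.card = q

/-- `F` is a facet (maximal face) of the complex with face predicate `faces`. -/
def IsFacet (faces : Finset V → Prop) (F : Finset V) : Prop :=
  faces F ∧ ∀ F', faces F' → F ⊆ F' → F = F'

/-- Even-connection of `u` and `v` with respect to the pairwise disjoint edges in `M`. -/
def EvenConnected (G : SimpleGraph V) (M : Finset (Sym2 V)) (u v : V) : Prop :=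
  ∃ (r : ℕ) (p : ℕ → V), 1 ≤ r ∧ p 0 = u ∧ p (2 * r + 1) = v ∧
    (∀ k, k ≤ 2 * r → G.Adj (p k) (p (k + 1))) ∧
    (∀ k, k < r → s(p (2 * k + 1), p (2 * k + 2)) ∈ M) ∧
    (∀ k l, k < r → l < r →
      s(p (2 * k + 1), p (2 * k + 2)) = s(p (2 * l + 1), p (2 * l + 2)) → k = l)

/-- The set of vertices covered by the edges in `M`. -/
def mSupp (M : Finset (Sym2 V)) : Set V := {v | ∃ e ∈ M, v ∈ e}

/-- The even-connection graph `G^{e₁⋯e_q}` (vertices covered by `M` are isolated). -/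
def evenConnGraph (G : SimpleGraph V) (M : Finset (Sym2 V)) : SimpleGraph V where
  Adj x y := x ≠ y ∧ x ∉ mSupp M ∧ y ∉ mSupp M ∧
    (G.Adj x y ∨ EvenConnected G M x y ∨ EvenConnected G M y x)
  symm := ⟨by
    rintro x y ⟨hne, hx, hy, h⟩
    refine ⟨hne.symm, hy, hx, ?_⟩
    rcases h with h | h | h
    · exact Or.inl h.symm
    · exact Or.inr (Or.inr h)
    · exact Or.inr (Or.inl h)⟩
  loopless := ⟨fun x h => h.1 rfl⟩

/-- Delete a set of vertices from a graph (keeping them as isolated vertices). -/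
def delSet (G : SimpleGraph V) (S : Set V) : SimpleGraph V where
  Adj x y := G.Adj x y ∧ x ∉ S ∧ y ∉ S
  symm := ⟨fun x y ⟨h, hx, hy⟩ => ⟨h.symm, hy, hx⟩⟩
  loopless := ⟨fun x ⟨h, _, _⟩ => G.loopless.irrefl x h⟩

/-- The whisker graph `W(H)`: each vertex `x` (as `Sum.inl x`) gets a pendant
whisker vertex `Sum.inr x`. -/
def whisker (H : SimpleGraph V) : SimpleGraph (V ⊕ V) where
  Adj x y :=
    (∃ a b, x = Sum.inl a ∧ y = Sum.inl b ∧ H.Adj a b) ∨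
    (∃ a, (x = Sum.inl a ∧ y = Sum.inr a) ∨ (x = Sum.inr a ∧ y = Sum.inl a))
  symm := ⟨by
    rintro x y (⟨a, b, hx, hy, hab⟩ | ⟨a, h | h⟩)
    · exact Or.inl ⟨b, a, hy, hx, hab.symm⟩
    · exact Or.inr ⟨a, Or.inr ⟨h.2, h.1⟩⟩
    · exact Or.inr ⟨a, Or.inl ⟨h.2, h.1⟩⟩⟩
  loopless := ⟨by
    rintro x (⟨a, b, hx, hy, hab⟩ | ⟨a, ⟨h1, h2⟩ | ⟨h1, h2⟩⟩)
    · obtain rfl := Sum.inl_injective (hx ▸ hy : (Sum.inl a : V ⊕ V) = Sum.inl b)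
      exact H.loopless.irrefl a hab
    · exact Sum.inl_ne_inr (h1 ▸ h2 : (Sum.inl a : V ⊕ V) = Sum.inr a)
    · exact Sum.inr_ne_inl (h1 ▸ h2 : (Sum.inr a : V ⊕ V) = Sum.inl a)⟩

/-- Shellability of the complex with face predicate `faces`: there is a linear
order `F 0, F 1, …` of all facets such that each facet meets the union of the
previous ones in a pure subcomplex of codimension one. -/
def Shellable (faces : Finset V → Prop) : Prop :=
  ∃ (t : ℕ) (F : Fin t → Finset V),
    (∀ i, IsFacet faces (F i)) ∧
    (∀ F', IsFacet faces F' → ∃ i, F' = F i) ∧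
    Function.Injective F ∧
    ∀ k : Fin t, 0 < (k : ℕ) → ∀ σ : Finset V, σ ⊆ F k →
      (∃ i, i < k ∧ σ ⊆ F i) →
      ∃ τ : Finset V, σ ⊆ τ ∧ τ ⊆ F k ∧ (∃ i, i < k ∧ τ ⊆ F i) ∧
        τ.card = (F k).card - 1

/-- Vertex decomposability of the complex with face predicate `faces`. -/
inductive VertexDecomposable [DecidableEq V] : (Finset V → Prop) → Prop
  | simplex (faces : Finset V → Prop) (F : Finset V)
      (h : ∀ F', faces F' ↔ F' ⊆ F) : VertexDecomposable faces
  | shed (faces : Finset V → Prop) (v : V)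
      (hdel : VertexDecomposable (fun F => faces F ∧ v ∉ F))
      (hlink : VertexDecomposable (fun F => v ∉ F ∧ faces (insert v F)))
      (hshed : ∀ F, v ∉ F → faces (insert v F) →
        ¬ IsFacet (fun F' => faces F' ∧ v ∉ F') F) :
      VertexDecomposable faces

/-- Every edge of a whisker graph has an endpoint of the form `Sum.inl a`. -/
lemma whisker_edge_has_inl {V : Type*} (H : SimpleGraph V) {e : Sym2 (V ⊕ V)}
    (he : e ∈ (whisker H).edgeSet) : ∃ a : V, Sum.inl a ∈ e := by
  induction e using Sym2.ind with
  | _ x y =>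
    rw [SimpleGraph.mem_edgeSet] at he
    rcases he with ⟨a, b, rfl, rfl, _⟩ | ⟨a, ⟨rfl, rfl⟩ | ⟨rfl, rfl⟩⟩
    · exact ⟨a, Sym2.mem_iff.mpr (Or.inl rfl)⟩
    · exact ⟨a, Sym2.mem_iff.mpr (Or.inl rfl)⟩
    · exact ⟨a, Sym2.mem_iff.mpr (Or.inr rfl)⟩

/-- A total choice function picking an `inl` label of an edge. -/
noncomputable def inlPick {V : Type*} [Inhabited V] (e : Sym2 (V ⊕ V)) : V :=
  letI := Classical.dec (∃ a : V, Sum.inl a ∈ e)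
  if h : ∃ a : V, Sum.inl a ∈ e then h.choose else default

lemma inlPick_mem {V : Type*} [Inhabited V] {e : Sym2 (V ⊕ V)}
    (h : ∃ a : V, Sum.inl a ∈ e) : Sum.inl (inlPick e) ∈ e := by
  unfold inlPick
  rw [dif_pos h]
  exact h.choose_spec

/-- for a whisker graph `G = W(H)` with `|V(H)| = n` and `1 ≤ q ≤ ν(G)`,
the maximum size of a subset of `V(G)` inducing no matching of size `q` is
`n + q - 1`, i.e. `dim MF^q(G) = n + q - 2`. -/
theorem dim_mfComplex_whisker
    {V : Type*} [Fintype V] [DecidableEq V] (H : SimpleGraph V)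
    (n : ℕ) (hn : Fintype.card V = n) (ν q : ℕ)
    (hν₁ : ∃ M : Finset (Sym2 (V ⊕ V)),
      IsMatchingOn (whisker H) Finset.univ M ∧ M.card = ν)
    (hν₂ : ∀ M : Finset (Sym2 (V ⊕ V)),
      IsMatchingOn (whisker H) Finset.univ M → M.card ≤ ν)
    (hq : 1 ≤ q) (hqν : q ≤ ν) :
    (∃ F : Finset (V ⊕ V), MFFace (whisker H) q F ∧ F.card = n + q - 1) ∧
    (∀ F : Finset (V ⊕ V), MFFace (whisker H) q F → F.card ≤ n + q - 1) := by
  classical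
  -- First: `V` is inhabited (since `q ≥ 1` there is at least one edge).
  obtain ⟨M₀, hM₀, hM₀card⟩ := hν₁
  have hM₀ne : M₀.Nonempty := by
    rw [← Finset.card_pos, hM₀card]; omega
  obtain ⟨e₀, he₀⟩ := hM₀ne
  obtain ⟨a₀, -⟩ := whisker_edge_has_inl H (hM₀.1 e₀ he₀)
  haveI : Inhabited V := ⟨a₀⟩
  -- the matching number is at most `n`
  have hνn : q ≤ n := by
    have hinj : Set.InjOn (inlPick (V := V)) M₀ := by
      intro e he e' he' hEq
      by_contra hne
      have h1 := inlPick_mem (whisker_edge_has_inl H (hM₀.1 e he))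
      have h2 := inlPick_mem (whisker_edge_has_inl H (hM₀.1 e' he'))
      rw [hEq] at h1
      exact hM₀.2.2 e' he' e he (fun h => hne h.symm) _ h2 h1
    have := Finset.card_le_card_of_injOn (inlPick (V := V))
      (fun e _ => Finset.mem_univ (inlPick e)) hinj
    rw [hM₀card, Finset.card_univ, hn] at this
    omega
  constructor
  · -- existence of a large face: all whisker vertices plus `q-1` inl vertices
    obtain ⟨S, -, hScard⟩ := Finset.exists_subset_card_eq (s := (Finset.univ : Finset V))
      (n := q - 1) (by rw [Finset.card_univ, hn]; omega)
    refine ⟨(Finset.univ.image (Sum.inr : V → V ⊕ V)) ∪ S.image Sum.inl, ?_, ?_⟩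
    · rintro ⟨M, hM, hMcard⟩
      have hle : M.card ≤ S.card := by
        apply Finset.card_le_card_of_injOn (inlPick (V := V))
        · intro e he
          have hmem := inlPick_mem (whisker_edge_has_inl H (hM.1 e he))
          have hF := hM.2.1 e he _ hmem
          rcases Finset.mem_union.mp hF with h | h
          · obtain ⟨b, -, hb⟩ := Finset.mem_image.mp h
            exact absurd hb (by simp)
          · obtain ⟨b, hbS, hb⟩ := Finset.mem_image.mp h
            rwa [← Sum.inl_injective hb]
        · intro e he e' he' hEq
          by_contra hne
          have h1 := inlPick_mem (whisker_edge_has_inl H (hM.1 e he))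
          have h2 := inlPick_mem (whisker_edge_has_inl H (hM.1 e' he'))
          rw [hEq] at h1
          exact hM.2.2 e' he' e he (fun h => hne h.symm) _ h2 h1
      rw [hMcard, hScard] at hle
      omega
    · have hdisj : Disjoint (Finset.univ.image (Sum.inr : V → V ⊕ V))
          (S.image Sum.inl) := by
        rw [Finset.disjoint_left]
        rintro x hx hx'
        obtain ⟨b, -, rfl⟩ := Finset.mem_image.mp hx
        obtain ⟨c, -, hc⟩ := Finset.mem_image.mp hx'
        exact Sum.inl_ne_inr hc
      rw [Finset.card_union_of_disjoint hdisj,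
        Finset.card_image_of_injective _ Sum.inr_injective,
        Finset.card_image_of_injective _ Sum.inl_injective,
        Finset.card_univ, hn, hScard]
      omega
  · -- upper bound
    intro F hF
    by_contra hcard
    push_neg at hcard
    have hFcard : n + q ≤ F.card := by omega
    set Al : Finset V := Finset.univ.filter (fun a => Sum.inl a ∈ F) with hAl
    set Ar : Finset V := Finset.univ.filter (fun a => Sum.inr a ∈ F) with hAr
    have hFeq : F = Al.image Sum.inl ∪ Ar.image Sum.inr := by
      ext x
      cases x with
      | inl a => simp [hAl, hAr]
      | inr a => simp [hAl, hAr]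
    have hFcard' : F.card = Al.card + Ar.card := by
      rw [hFeq, Finset.card_union_of_disjoint, 
        Finset.card_image_of_injective _ Sum.inl_injective,
        Finset.card_image_of_injective _ Sum.inr_injective]
      rw [Finset.disjoint_left]
      rintro x hx hx'
      obtain ⟨b, -, rfl⟩ := Finset.mem_image.mp hx
      obtain ⟨c, -, hc⟩ := Finset.mem_image.mp hx'
      exact Sum.inr_ne_inl hc
    have hunion : (Al ∪ Ar).card ≤ n := by
      rw [← hn, ← Finset.card_univ]
      exact Finset.card_le_card (Finset.subset_univ _)
    have hKcard : q ≤ (Al ∩ Ar).card := by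
      have := Finset.card_union_add_card_inter Al Ar
      omega
    obtain ⟨K, hKsub, hKcardq⟩ := Finset.exists_subset_card_eq (s := Al ∩ Ar) (n := q) hKcard
    have hKmem : ∀ a ∈ K, Sum.inl a ∈ F ∧ Sum.inr a ∈ F := by
      intro a ha
      have h := hKsub ha
      rw [Finset.mem_inter, hAl, hAr, Finset.mem_filter, Finset.mem_filter] at h
      exact ⟨h.1.2, h.2.2⟩
    have hinj : Function.Injective (fun a : V => s(Sum.inl a, Sum.inr a)) := by
      intro a b h
      simp only [Sym2.eq, Sym2.rel_iff', Prod.mk.injEq, Prod.swap_prod_mk] at h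
      rcases h with ⟨h1, -⟩ | ⟨h1, -⟩
      · exact Sum.inl_injective h1
      · exact absurd h1 (Sum.inl_ne_inr)
    apply hF
    refine ⟨K.image (fun a => s(Sum.inl a, Sum.inr a)), ⟨?_, ?_, ?_⟩, ?_⟩
    · intro e he
      obtain ⟨a, -, rfl⟩ := Finset.mem_image.mp he
      rw [SimpleGraph.mem_edgeSet]
      exact Or.inr ⟨a, Or.inl ⟨rfl, rfl⟩⟩
    · intro e he v hv
      obtain ⟨a, ha, rfl⟩ := Finset.mem_image.mp he
      rcases Sym2.mem_iff.mp hv with rfl | rfl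
      · exact (hKmem a ha).1
      · exact (hKmem a ha).2
    · intro e he e' he' hne v hv hv'
      obtain ⟨a, -, rfl⟩ := Finset.mem_image.mp he
      obtain ⟨b, -, rfl⟩ := Finset.mem_image.mp he'
      have hab : a ≠ b := fun h => hne (by rw [h])
      rcases Sym2.mem_iff.mp hv with rfl | rfl
      · rcases Sym2.mem_iff.mp hv' with h | h
        · exact hab (Sum.inl_injective h)
        · exact Sum.inl_ne_inr h
      · rcases Sym2.mem_iff.mp hv' with h | h
        · exact Sum.inr_ne_inl h
        · exact hab (Sum.inr_injective h)
    · rw [Finset.card_image_of_injective _ hinj, hKcardq]
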